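/- (Invariance of DB priors, no nuisance parameters.) Let ξ: Θ → Ξ be a smooth bijection with nonvanishing Jacobian, and suppose the base priors satisfy π_θ^N(θ) ∝ π_ξ^N(ξ(θ))|J_ξ(θ)| and the unitary divergence is reparameterization-invariant: D̄*[ξ(θ), ξ(θ₀)] = D̄[θ, θ₀]. Then the DB priors π_θ^D(θ) = c^{-1} h(D̄[θ,θ₀]) π_θ^N(θ) and π_ξ^D(ξ) = c*^{-1} h(D̄*[ξ,ξ₀]) π_ξ^N(ξ) (each normalized to integrate to 1) satisfy π_θ^D(θ) = π_ξ^D(ξ(θ)) |J_ξ(θ)| for all θ. -/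

import Mathlib

open Real MeasureTheory

/-- Invariance of DB priors (no nuisance parameters): if the base priors satisfy
`pr_θ^N(θ) = κ·pr_ξ^N(ξ(θ))·|J_ξ(θ)|` for a smooth bijection `ξ` with nonvanishing
Jacobian, and the unitary divergence is reparameterization invariant, then the
normalized DB priors satisfy `pr_θ^D(θ) = pr_ξ^D(ξ(θ))·|J_ξ(θ)|`. -/
theorem DB_prior_invariance
    (h : ℝ → ℝ) (hpos : ∀ t, 0 ≤ t → 0 < h t) (hanti : AntitoneOn h (Set.Ici 0))
    (ξ : ℝ → ℝ) (hbij : Function.Bijective ξ) (hsm : ContDiff ℝ 1 ξ)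
    (hJ : ∀ θ, deriv ξ θ ≠ 0)
    (θ₀ : ℝ) (D Dstar : ℝ → ℝ → ℝ)
    (hD0 : ∀ θ θ', 0 ≤ D θ θ') (hDs0 : ∀ x x', 0 ≤ Dstar x x')
    (hinvD : ∀ θ, Dstar (ξ θ) (ξ θ₀) = D θ θ₀)
    (prθN prξN : ℝ → ℝ) (κ : ℝ) (hκ : 0 < κ)
    (hrel : ∀ θ, prθN θ = κ * prξN (ξ θ) * |deriv ξ θ|)
    (c cstar : ℝ)
    (hci : Integrable (fun θ => h (D θ θ₀) * prθN θ))
    (hc : c = ∫ θ, h (D θ θ₀) * prθN θ) (hcpos : 0 < c)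
    (hcsi : Integrable (fun x => h (Dstar x (ξ θ₀)) * prξN x))
    (hcs : cstar = ∫ x, h (Dstar x (ξ θ₀)) * prξN x) (hcspos : 0 < cstar) :
    ∀ θ, c⁻¹ * (h (D θ θ₀) * prθN θ)
        = (cstar⁻¹ * (h (Dstar (ξ θ) (ξ θ₀)) * prξN (ξ θ))) * |deriv ξ θ| := by
  have key : c = κ * cstar := by
    have himg : ξ '' Set.univ = Set.univ := by
      rw [Set.image_univ, Set.range_eq_univ.2 hbij.2]
    have hderiv : ∀ x ∈ (Set.univ : Set ℝ), HasDerivWithinAt ξ (deriv ξ x) Set.univ x :=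
      fun x _ => ((hsm.differentiable one_ne_zero x).hasDerivAt).hasDerivWithinAt
    have hchg := MeasureTheory.integral_image_eq_integral_abs_deriv_smul
      MeasurableSet.univ hderiv (hbij.1.injOn) (fun x => h (Dstar x (ξ θ₀)) * prξN x)
    rw [himg] at hchg
    simp only [MeasureTheory.setIntegral_univ, smul_eq_mul] at hchg
    rw [hc, hcs, hchg, ← MeasureTheory.integral_const_mul]
    congr 1; ext θ
    rw [hrel θ, hinvD θ]; ring
  intro θ
  rw [hrel θ, hinvD θ, key]
  have hcs' : cstar ≠ 0 := ne_of_gt hcspos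
  have hκ' : κ ≠ 0 := ne_of_gt hκ
  field_simp
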